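/- Let R be a commutative ring in which 2 is invertible, let 𝒢 be a smooth affine group scheme over R, let c : 𝒢 → 𝔾_{m,R} be a homomorphism of group schemes over R, and suppose there exists a group scheme homomorphism d : 𝔾_{m,R} → 𝒢 with c ∘ d equal to the squaring homomorphism λ ↦ λ² of 𝔾_{m,R}. Then c is a smooth morphism. (In the paper this is applied with R = ℤ_p, p > 2, 𝒢 a smooth closed subgroup scheme of the symplectic similitude group GSp(Λ) of a self-dual symplectic ℤ_p-lattice Λ containing the central scalar torus 𝔾_m, and c the symplectic similitude character, for which c(diag(λ)) = λ².) -/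

import Mathlib

open TensorProduct

/-- The comultiplication of the Hopf algebra `R[t,t⁻¹] = R[ℤ]`, the coordinate ring of
`𝔾_{m,R}`: it is determined by `t^n ↦ t^n ⊗ t^n`. -/
noncomputable def comulGm (R : Type*) [CommRing R] (x : AddMonoidAlgebra R ℤ) :
    TensorProduct R (AddMonoidAlgebra R ℤ) (AddMonoidAlgebra R ℤ) :=
  Finsupp.sum x.coeff fun n r =>
    r • (AddMonoidAlgebra.single n (1 : R) ⊗ₜ[R] AddMonoidAlgebra.single n (1 : R))

/-- The counit of the Hopf algebra `R[t,t⁻¹]`: it is determined by `t^n ↦ 1`. -/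
noncomputable def counitGm (R : Type*) [CommRing R] (x : AddMonoidAlgebra R ℤ) : R :=
  Finsupp.sum x.coeff fun _ r => r

section aux
variable {R B : Type} [CommRing R] [CommRing B] [Algebra R B]

lemma counitGm_single (n : ℤ) (r : R) : counitGm R (AddMonoidAlgebra.single n r) = r :=
  Finsupp.sum_single_index rfl

lemma counitGm_add (a b : AddMonoidAlgebra R ℤ) :
    counitGm R (a + b) = counitGm R a + counitGm R b :=
  Finsupp.sum_add_index' (by simp) (by intros; rfl)

lemma comulGm_single (n : ℤ) (r : R) :
    comulGm R (AddMonoidAlgebra.single n r)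
      = r • (AddMonoidAlgebra.single n (1:R) ⊗ₜ[R] AddMonoidAlgebra.single n (1:R)) :=
  Finsupp.sum_single_index (by simp)

/-- auxiliary linear map `R[ℤ] → B`, `tⁿ ↦ n • η`. -/
noncomputable def gzero (η : B) : AddMonoidAlgebra R ℤ →ₗ[R] B :=
  (Finsupp.lsum R fun n : ℤ => (n : ℤ) • LinearMap.toSpanSingleton R B η) ∘ₗ
    (AddMonoidAlgebra.coeffLinearEquiv R).toLinearMap

lemma gzero_single (η : B) (n : ℤ) (r : R) :
    gzero η (AddMonoidAlgebra.single n r) = n • (r • η) := by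
  show Finsupp.lsum R _ (Finsupp.single n r) = _
  rw [Finsupp.lsum_single]
  simp [LinearMap.toSpanSingleton, smul_comm]

lemma gzero_mul (η : B) (a b : AddMonoidAlgebra R ℤ) :
    gzero η (a * b) = algebraMap R B (counitGm R a) * gzero η b
      + algebraMap R B (counitGm R b) * gzero η a := by
  induction a using AddMonoidAlgebra.induction_linear with
  | zero => simp [counitGm]
  | add a₁ a₂ h1 h2 =>
      rw [add_mul, map_add, h1, h2, counitGm_add, map_add, map_add]
      ring
  | single n r =>
      induction b using AddMonoidAlgebra.induction_linear with
      | zero => simp [counitGm]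
      | add b₁ b₂ h1 h2 =>
          rw [mul_add, map_add, h1, h2, counitGm_add, map_add, map_add]
          ring
      | single k s =>
          rw [AddMonoidAlgebra.single_mul_single, gzero_single, gzero_single, gzero_single,
            counitGm_single, counitGm_single]
          rw [add_smul, ← Algebra.smul_def, ← Algebra.smul_def]
          rw [smul_comm r, smul_comm s, ← mul_smul, ← mul_smul, mul_comm s r]
          abel

lemma gzero_mem {η : B} (I : Ideal B) (hη : η ∈ I) (z : AddMonoidAlgebra R ℤ) :
    gzero η z ∈ I := by
  have h : gzero η z = Finsupp.sum z.coeff fun n r => n • (r • η) := by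
    show Finsupp.lsum R _ z.coeff = _
    rw [Finsupp.lsum_apply]
    refine Finsupp.sum_congr fun n _ => ?_
    simp [LinearMap.toSpanSingleton, smul_comm]
  rw [h, Finsupp.sum]
  refine Submodule.sum_mem I fun n _ => ?_
  rw [zsmul_eq_mul]
  refine I.mul_mem_left _ ?_
  rw [Algebra.smul_def]
  exact I.mul_mem_left _ hη

end aux

section Daux
variable {R H B : Type} [CommRing R] [CommRing H] [Bialgebra R H] [CommRing B] [Algebra R B]

/-- The "invariant derivation" `x ↦ Σ f(x₁) φ(x₂)`. -/
noncomputable def Dinv (f : H →ₐ[R] B) (φ : H →ₗ[R] B) : H →ₗ[R] B :=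
  LinearMap.mul' R B ∘ₗ TensorProduct.map f.toLinearMap φ ∘ₗ Coalgebra.comul

lemma Tmap_comul (f : H →ₐ[R] B) (x : H) :
    (LinearMap.mul' R B ∘ₗ TensorProduct.map f.toLinearMap
      ((Algebra.linearMap R B) ∘ₗ (Coalgebra.counit : H →ₗ[R] R))) (Coalgebra.comul x) = f x := by
  have key : ∀ z : H ⊗[R] H,
      (LinearMap.mul' R B ∘ₗ TensorProduct.map f.toLinearMap
        ((Algebra.linearMap R B) ∘ₗ (Coalgebra.counit : H →ₗ[R] R))) z
      = f ((TensorProduct.rid R H) ((LinearMap.lTensor H (Coalgebra.counit : H →ₗ[R] R)) z)) := by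
    intro z
    induction z with
    | zero => simp
    | tmul a x =>
        simp only [LinearMap.comp_apply, TensorProduct.map_tmul, LinearMap.mul'_apply,
          LinearMap.lTensor_tmul, TensorProduct.rid_tmul, Algebra.linearMap_apply, map_smul,
          AlgHom.toLinearMap_apply]
        rw [Algebra.smul_def, mul_comm]
    | add z w hz hw => simp [map_add, hz, hw]
  rw [key, Coalgebra.lTensor_counit_comul]
  simp

lemma Dinv_apply (f : H →ₐ[R] B) (φ : H →ₗ[R] B) (x : H) :
    Dinv f φ x = (LinearMap.mul' R B) (TensorProduct.map f.toLinearMap φ (Coalgebra.comul x)) :=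
  rfl

lemma Dinv_mul (f : H →ₐ[R] B) (φ : H →ₗ[R] B)
    (hφ : ∀ x y : H, φ (x * y) = algebraMap R B (Coalgebra.counit x) * φ y
        + algebraMap R B (Coalgebra.counit y) * φ x) (x y : H) :
    Dinv f φ (x * y) = f x * Dinv f φ y + f y * Dinv f φ x := by
  set T : H ⊗[R] H →ₗ[R] B := LinearMap.mul' R B ∘ₗ TensorProduct.map f.toLinearMap
      ((Algebra.linearMap R B) ∘ₗ (Coalgebra.counit : H →ₗ[R] R)) with hT
  set Dm : H ⊗[R] H →ₗ[R] B := LinearMap.mul' R B ∘ₗ TensorProduct.map f.toLinearMap φ with hDm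
  have key : ∀ z w : H ⊗[R] H, Dm (z * w) = T z * Dm w + Dm z * T w := by
    intro z w
    induction z with
    | zero => simp
    | tmul a u =>
        induction w with
        | zero => simp
        | tmul b v =>
            rw [Algebra.TensorProduct.tmul_mul_tmul]
            simp only [hDm, hT, LinearMap.comp_apply, TensorProduct.map_tmul,
              LinearMap.mul'_apply, Algebra.linearMap_apply, map_mul,
              AlgHom.toLinearMap_apply]
            rw [hφ u v]
            ring
        | add w₁ w₂ h1 h2 =>
            rw [mul_add, map_add, h1, h2]
            simp only [map_add]
            ring
    | add z₁ z₂ h1 h2 =>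
        rw [add_mul, map_add, h1, h2]
        simp only [map_add]
        ring
  have hcm : Coalgebra.comul (R := R) (x * y) = Coalgebra.comul x * Coalgebra.comul y :=
    Bialgebra.comul_mul x y
  show Dm (Coalgebra.comul (x*y)) = f x * Dm (Coalgebra.comul y) + f y * Dm (Coalgebra.comul x)
  rw [hcm, key, Tmap_comul, Tmap_comul]
  ring

lemma Dinv_one (f : H →ₐ[R] B) (φ : H →ₗ[R] B) (hφ1 : φ 1 = 0) : Dinv f φ 1 = 0 := by
  rw [Dinv_apply, Bialgebra.comul_one, Algebra.TensorProduct.one_def]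
  simp [hφ1]

lemma Dinv_mem (f : H →ₐ[R] B) (φ : H →ₗ[R] B) (I : Ideal B) (hφ : ∀ x, φ x ∈ I) (x : H) :
    Dinv f φ x ∈ I := by
  rw [Dinv_apply]
  induction Coalgebra.comul (R := R) x with
  | zero => simp
  | tmul a u => simpa using I.mul_mem_left (f a) (hφ u)
  | add z w hz hw => rw [map_add, map_add]; exact I.add_mem hz hw

end Daux

lemma int_addMonoid_fg : AddMonoid.FG ℤ := by
  rw [AddMonoid.fg_def]
  refine ⟨{1, -1}, ?_⟩
  rw [eq_top_iff]
  intro n _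
  rcases le_or_gt 0 n with h | h
  · have : n = n.toNat • (1 : ℤ) := by simp [Int.toNat_of_nonneg h]
    rw [this]
    exact AddSubmonoid.nsmul_mem _ (AddSubmonoid.subset_closure (by simp)) _
  · have : n = n.natAbs • (-1 : ℤ) := by
      have : (n.natAbs : ℤ) = -n := by omega
      simp [this]
    rw [this]
    exact AddSubmonoid.nsmul_mem _ (AddSubmonoid.subset_closure (by simp)) _
theorem statement15 (R : Type) [CommRing R] (h2 : IsUnit (2 : R))
    (H : Type) [CommRing H] [HopfAlgebra R H]
    (hGsmooth : Algebra.Smooth R H)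
    -- `c : 𝒢 → 𝔾_m`, i.e. a Hopf algebra homomorphism `R[t,t⁻¹] → 𝒪(𝒢) = H`
    (c : AddMonoidAlgebra R ℤ →ₐ[R] H)
    (hc_counit : ∀ x, Coalgebra.counit (R := R) (c x) = counitGm R x)
    (hc_comul : ∀ x, Coalgebra.comul (R := R) (c x)
        = TensorProduct.map c.toLinearMap c.toLinearMap (comulGm R x))
    -- `d : 𝔾_m → 𝒢`, i.e. a Hopf algebra homomorphism `H → R[t,t⁻¹]`
    (d : H →ₐ[R] AddMonoidAlgebra R ℤ)
    (hd_counit : ∀ x, counitGm R (d x) = Coalgebra.counit (R := R) x)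
    (hd_comul : ∀ x, comulGm R (d x)
        = TensorProduct.map d.toLinearMap d.toLinearMap (Coalgebra.comul (R := R) x))
    -- `c ∘ d` is the squaring homomorphism `λ ↦ λ²` of `𝔾_m`, whose coordinate ring map
    -- sends `t^n ↦ t^{2n}`
    (hcd : ∀ z : ℤ, d (c (AddMonoidAlgebra.single z (1 : R)))
        = AddMonoidAlgebra.single (2 * z) (1 : R)) :
    -- then `c` is smooth: the ring map `R[t,t⁻¹] → 𝒪(𝒢)` makes `𝒪(𝒢)` a smooth
    -- `R[t,t⁻¹]`-algebra
    ∀ (inst : Algebra (AddMonoidAlgebra R ℤ) H),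
      (∀ x, @algebraMap (AddMonoidAlgebra R ℤ) H _ _ inst x = c x) →
      @Algebra.Smooth (AddMonoidAlgebra R ℤ) _ H _ inst := by
  intro inst hinst
  haveI tower : IsScalarTower R (AddMonoidAlgebra R ℤ) H :=
    IsScalarTower.of_algebraMap_eq fun r => by rw [hinst]; exact (c.commutes r).symm
  constructor
  · -- Formal smoothness
    refine Algebra.FormallySmooth.of_comp_surjective ?_
    intro B _ _ I hI gbar
    letI : Algebra R B :=
      ((algebraMap (AddMonoidAlgebra R ℤ) B).comp (algebraMap R (AddMonoidAlgebra R ℤ))).toAlgebra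
    haveI : IsScalarTower R (AddMonoidAlgebra R ℤ) B := IsScalarTower.of_algebraMap_eq' rfl
    haveI : IsScalarTower R (AddMonoidAlgebra R ℤ) (B ⧸ I) :=
      IsScalarTower.of_algebraMap_eq fun r => rfl
    haveI := hGsmooth.formallySmooth
    set gbarR : H →ₐ[R] B ⧸ I := gbar.restrictScalars R with hgbarR
    set f : H →ₐ[R] B := Algebra.FormallySmooth.lift I ⟨2, hI⟩ gbarR with hfdef
    have hf : ∀ x, Ideal.Quotient.mk I (f x) = gbar x := fun x =>
      Algebra.FormallySmooth.mk_lift I ⟨2, hI⟩ gbarR x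
    have hzero : ∀ {i j : B}, i ∈ I → j ∈ I → i * j = 0 := by
      intro i j hi hj
      have h : i * j ∈ I ^ 2 := by rw [pow_two]; exact Ideal.mul_mem_mul hi hj
      rwa [hI, Ideal.mem_bot] at h
    set v : AddMonoidAlgebra R ℤ →+* B := algebraMap (AddMonoidAlgebra R ℤ) B with hv
    set δ : AddMonoidAlgebra R ℤ → B := fun a => f (c a) - v a with hδ
    have hδa : ∀ a, δ a = f (c a) - v a := fun a => rfl
    have hδI : ∀ a, δ a ∈ I := by
      intro a
      rw [hδa, ← Ideal.Quotient.eq, hf, ← hinst, AlgHom.commutes]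
      rfl
    obtain ⟨half, hhalf⟩ := h2.exists_right_inv
    set t : AddMonoidAlgebra R ℤ := AddMonoidAlgebra.single 1 1 with ht
    set ti : AddMonoidAlgebra R ℤ := AddMonoidAlgebra.single (-1) 1 with hti
    have htti : t * ti = 1 := by
      rw [ht, hti, AddMonoidAlgebra.single_mul_single]
      norm_num [AddMonoidAlgebra.one_def]
    set m : B := v ti * δ t with hm
    have hmI : m ∈ I := I.mul_mem_left _ (hδI t)
    set η : B := half • m with hη
    have hηI : η ∈ I := by rw [hη, Algebra.smul_def]; exact I.mul_mem_left _ hmI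
    set φ : H →ₗ[R] B := (gzero η).comp d.toLinearMap with hφdef
    have hφa : ∀ x, φ x = gzero η (d x) := fun x => rfl
    have hφmul : ∀ x y : H, φ (x * y) = algebraMap R B (Coalgebra.counit x) * φ y
        + algebraMap R B (Coalgebra.counit y) * φ x := by
      intro x y
      rw [hφa, hφa, hφa, map_mul, gzero_mul, hd_counit, hd_counit]
    have hφ1 : φ 1 = 0 := by
      rw [hφa, map_one, AddMonoidAlgebra.one_def, gzero_single, zero_smul]
    have hφI : ∀ x, φ x ∈ I := fun x => by rw [hφa]; exact gzero_mem I hηI _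
    set D : H →ₗ[R] B := Dinv f φ with hD
    have hDmul : ∀ x y : H, D (x * y) = f x * D y + f y * D x := Dinv_mul f φ hφmul
    have hD1 : D 1 = 0 := Dinv_one f φ hφ1
    have hDI : ∀ x, D x ∈ I := Dinv_mem f φ I hφI
    have hfc : ∀ a, f (c a) = v a + δ a := fun a => by rw [hδa]; ring
    have hδmul : ∀ a b, δ (a * b) = v a * δ b + v b * δ a := by
      intro a b
      have h0 : δ a * δ b = 0 := hzero (hδI a) (hδI b)
      rw [hδa, map_mul, map_mul, map_mul, hfc a, hfc b]
      linear_combination h0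
    have hDcmul : ∀ a b, D (c (a * b)) = v a * D (c b) + v b * D (c a) := by
      intro a b
      rw [map_mul, hDmul, hfc a, hfc b]
      have h1 : δ a * D (c b) = 0 := hzero (hδI a) (hDI _)
      have h2 : δ b * D (c a) = 0 := hzero (hδI b) (hDI _)
      linear_combination h1 + h2
    have hvt : v t * v ti = 1 := by rw [← map_mul, htti, map_one]
    -- value at t
    have hct2 : d (c t) = AddMonoidAlgebra.single (2:ℤ) 1 := by
      have := hcd 1
      rw [mul_one] at this
      exact this
    have hφct : φ (c t) = m := by
      rw [hφa, hct2, gzero_single, one_smul, hη, ← smul_assoc]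
      have h2h : (2:ℤ) • half = (1:R) := by
        rw [zsmul_eq_mul]
        push_cast
        linear_combination hhalf
      rw [h2h, one_smul]
    have hDct : D (c t) = δ t := by
      have hcom : Coalgebra.comul (R := R) (c t) = c t ⊗ₜ[R] c t := by
        rw [hc_comul, ht, comulGm_single, one_smul, TensorProduct.map_tmul]
        rfl
      have hDval : D (c t) = f (c t) * φ (c t) := by
        rw [hD, Dinv_apply, hcom, TensorProduct.map_tmul, LinearMap.mul'_apply,
          AlgHom.toLinearMap_apply]
      rw [hDval, hφct, hm, hfc t]
      have h0 : δ t * (v ti * δ t) = 0 := hzero (hδI t) (I.mul_mem_left _ (hδI t))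
      linear_combination h0 + (δ t) * hvt
    -- value at t⁻¹
    have hδ1 : δ 1 = 0 := by rw [hδa, map_one, map_one, map_one, sub_self]
    have hδti : v t * δ ti + v ti * δ t = 0 := by
      have h1 : δ (t * ti) = 0 := by rw [htti, hδ1]
      rw [hδmul] at h1
      linear_combination h1
    have hDcti : v t * D (c ti) + v ti * D (c t) = 0 := by
      have h1 : D (c (t * ti)) = 0 := by rw [htti, map_one, hD1]
      rw [hDcmul] at h1
      linear_combination h1
    have hti_eq : D (c ti) = δ ti := by
      linear_combination (v ti) * hDcti - (v ti) * hδti - (v ti * v ti) * hDct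
        - (D (c ti) - δ ti) * hvt
    -- induction on ℤ
    have key1 : ∀ n : ℤ, D (c (AddMonoidAlgebra.single n (1:R)))
        = δ (AddMonoidAlgebra.single n 1) := by
      intro n
      induction n using Int.induction_on with
      | zero =>
          rw [← AddMonoidAlgebra.one_def, map_one, hD1, hδ1]
      | succ k ih =>
          have hs : AddMonoidAlgebra.single ((k:ℤ)+1) (1:R)
              = AddMonoidAlgebra.single (k:ℤ) 1 * t := by
            rw [ht, AddMonoidAlgebra.single_mul_single, mul_one]
          rw [hs, hDcmul, hδmul, ih, hDct]
      | pred k ih =>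
          have he : (-(k:ℤ)-1) = (-(k:ℤ)) + (-1) := by ring
          have hs : AddMonoidAlgebra.single (-(k:ℤ)-1) (1:R)
              = AddMonoidAlgebra.single (-(k:ℤ)) 1 * ti := by
            rw [he, hti, AddMonoidAlgebra.single_mul_single, mul_one]
          rw [hs, hDcmul, hδmul, ih, hti_eq]
    -- from singles to everything
    have key2 : ∀ a, D (c a) = δ a := by
      intro a
      induction a using AddMonoidAlgebra.induction_linear with
      | zero =>
          rw [map_zero, map_zero, hδa, map_zero, map_zero, map_zero, sub_self]
      | add a b ha hb =>
          rw [map_add, map_add, ha, hb, hδa, hδa, hδa, map_add, map_add, map_add]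
          ring
      | single n r =>
          show D (c (AddMonoidAlgebra.single n r)) = δ (AddMonoidAlgebra.single n r)
          have hs : AddMonoidAlgebra.single n r
              = AddMonoidAlgebra.single (0:ℤ) r * AddMonoidAlgebra.single n 1 := by
            rw [AddMonoidAlgebra.single_mul_single, zero_add, mul_one]
          have h0r : AddMonoidAlgebra.single (0:ℤ) r
              = algebraMap R (AddMonoidAlgebra R ℤ) r := by
            rw [AddMonoidAlgebra.coe_algebraMap]
            simp
          have hδ0 : δ (AddMonoidAlgebra.single (0:ℤ) r) = 0 := by
            rw [hδa, h0r, AlgHom.commutes, AlgHom.commutes, hv,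
              ← IsScalarTower.algebraMap_apply, sub_self]
          have hD0 : D (c (AddMonoidAlgebra.single (0:ℤ) r)) = 0 := by
            rw [h0r, AlgHom.commutes, Algebra.algebraMap_eq_smul_one, map_smul, hD1, smul_zero]
          rw [hs, hDcmul, hδmul, key1 n, hδ0, hD0, mul_zero]
    -- construct the corrected lift
    refine ⟨{ toFun := fun x => f x - D x, map_one' := ?_, map_mul' := ?_,
              map_zero' := ?_, map_add' := ?_, commutes' := ?_ }, ?_⟩
    · show f 1 - D 1 = 1
      rw [map_one, hD1, sub_zero]
    · intro x y
      show f (x * y) - D (x * y) = (f x - D x) * (f y - D y)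
      rw [map_mul, hDmul]
      have h0 : D x * D y = 0 := hzero (hDI x) (hDI y)
      linear_combination -h0
    · show f 0 - D 0 = 0
      rw [map_zero, map_zero, sub_zero]
    · intro x y
      show f (x + y) - D (x + y) = (f x - D x) + (f y - D y)
      rw [map_add, map_add]
      ring
    · intro a
      show f ((algebraMap (AddMonoidAlgebra R ℤ) H) a) - D ((algebraMap (AddMonoidAlgebra R ℤ) H) a)
        = algebraMap (AddMonoidAlgebra R ℤ) B a
      rw [hinst, key2, hδa]
      ring
    · ext x
      show Ideal.Quotient.mk I (f x - D x) = gbar x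
      rw [map_sub, hf, Ideal.Quotient.eq_zero_iff_mem.mpr (hDI x), sub_zero]
  · -- Finite presentation
    haveI := hGsmooth.finitePresentation
    haveI : AddMonoid.FG ℤ := int_addMonoid_fg
    exact Algebra.FinitePresentation.of_restrict_scalars_finitePresentation R
      (AddMonoidAlgebra R ℤ) H
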